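/- Let f : {0,1}^n → {0,1} and F(x,y) = f(x ⊕ y). Then the ε-approximate monomial complexity of f is at least the ε-approximate rank of F: mon_ε(f) ≥ rank_ε(F). Similarly, the sign monomial complexity of f is at least the sign rank of F: signmon(f) ≥ signrank(F). -/

import Mathlib

noncomputable def chi {n : ℕ} (S : Finset (Fin n)) (x : Fin n → Bool) : ℝ :=
  (-1 : ℝ) ^ (S.filter fun i => x i = true).card

open Finset

lemma chi_eq_prod {n : ℕ} (S : Finset (Fin n)) (x : Fin n → Bool) :
    chi S x = ∏ i ∈ S, (if x i then (-1:ℝ) else 1) := by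
  rw [Finset.prod_ite, Finset.prod_const, Finset.prod_const, one_pow, mul_one, chi]

lemma chi_mul_chi {n : ℕ} (S : Finset (Fin n)) (x y : Fin n → Bool) :
    chi S x * chi S y = chi S (fun i => xor (x i) (y i)) := by
  rw [chi_eq_prod, chi_eq_prod, chi_eq_prod, ← Finset.prod_mul_distrib]
  refine Finset.prod_congr rfl fun i _ => ?_
  cases hx : x i <;> cases hy : y i <;> norm_num

lemma sum_chi {n : ℕ} (z : Fin n → Bool) :
    ∑ S : Finset (Fin n), chi S z = if z = (fun _ => false) then (2:ℝ)^n else 0 := by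
  have h : ∑ S : Finset (Fin n), chi S z
      = ∑ S ∈ (univ : Finset (Fin n)).powerset, (∏ i ∈ S, (if z i then (-1:ℝ) else 1)) *
        ∏ i ∈ univ \ S, (1:ℝ) := by
    rw [Finset.powerset_univ]
    refine Finset.sum_congr rfl fun S _ => ?_
    rw [Finset.prod_const_one, mul_one, chi_eq_prod]
  rw [h, ← Finset.prod_add]
  by_cases hz : z = fun _ => false
  · subst hz
    simp only [if_pos rfl]
    norm_num
  · have : ∃ i, z i = true := by
      by_contra hc
      push_neg at hc
      exact hz (funext fun i => by simpa using hc i)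
    obtain ⟨i, hi⟩ := this
    rw [if_neg hz]
    refine Finset.prod_eq_zero (Finset.mem_univ i) ?_
    simp [hi]

lemma sum_chi_mul_chi {n : ℕ} (x y : Fin n → Bool) :
    ∑ S : Finset (Fin n), chi S x * chi S y = if x = y then (2:ℝ)^n else 0 := by
  simp only [chi_mul_chi]
  rw [sum_chi]
  congr 1
  simp only [eq_iff_iff]
  constructor
  · intro h
    ext i
    have := congrFun h i
    cases hx : x i <;> cases hy : y i <;> simp_all
  · intro h; subst h; funext i; simp

noncomputable def fc {n : ℕ} (g : (Fin n → Bool) → ℝ) (S : Finset (Fin n)) : ℝ :=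
  (∑ x : Fin n → Bool, g x * chi S x) / 2 ^ n

lemma fourier_inversion {n : ℕ} (g : (Fin n → Bool) → ℝ) (y : Fin n → Bool) :
    ∑ S : Finset (Fin n), fc g S * chi S y = g y := by
  simp only [fc, div_mul_eq_mul_div, Finset.sum_mul]
  rw [← Finset.sum_div, Finset.sum_comm]
  have : ∀ x : Fin n → Bool, ∑ S : Finset (Fin n), g x * chi S x * chi S y
      = g x * (if x = y then (2:ℝ)^n else 0) := by
    intro x
    rw [← sum_chi_mul_chi x y, Finset.mul_sum]
    exact Finset.sum_congr rfl fun S _ => (mul_assoc _ _ _)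
  rw [Finset.sum_congr rfl fun x _ => this x]
  simp only [mul_ite, mul_zero]
  rw [Finset.sum_ite_eq' Finset.univ y (fun x => g x * (2:ℝ)^n)]
  simp only [Finset.mem_univ, if_pos]
  rw [mul_div_assoc]
  simp

lemma matrix_rank_add_le {ι κ : Type*} [Fintype ι] [Fintype κ] (A B : Matrix ι κ ℝ) :
    (A + B).rank ≤ A.rank + B.rank := by
  classical
  rw [Matrix.rank, Matrix.rank, Matrix.rank, Matrix.mulVecLin_add]
  have hle : LinearMap.range (A.mulVecLin + B.mulVecLin) ≤
      LinearMap.range A.mulVecLin ⊔ LinearMap.range B.mulVecLin := by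
    rintro x ⟨v, rfl⟩
    exact Submodule.add_mem_sup ⟨v, rfl⟩ ⟨v, rfl⟩
  calc Module.finrank ℝ (LinearMap.range (A.mulVecLin + B.mulVecLin))
      ≤ Module.finrank ℝ ↥(LinearMap.range A.mulVecLin ⊔ LinearMap.range B.mulVecLin) :=
        Submodule.finrank_mono hle
    _ ≤ _ := Submodule.finrank_add_le_finrank_add_finrank _ _

lemma matrix_rank_vecMulVec_le {ι κ : Type*} [Fintype ι] [Fintype κ]
    (w : ι → ℝ) (v : κ → ℝ) : (Matrix.vecMulVec w v).rank ≤ 1 := by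
  classical
  rw [Matrix.vecMulVec_eq (Fin 1)]
  exact le_trans (Matrix.rank_mul_le_left _ _) (by
    exact (by simpa using Matrix.rank_le_card_width (Matrix.replicateCol (Fin 1) w) :
      (Matrix.replicateCol (Fin 1) w).rank ≤ 1))

lemma matrix_rank_sum_le {ι κ α : Type*} [Fintype ι] [Fintype κ]
    (s : Finset α) (M : α → Matrix ι κ ℝ) :
    (∑ a ∈ s, M a).rank ≤ ∑ a ∈ s, (M a).rank := by
  classical
  induction s using Finset.induction_on with
  | empty => simp [Matrix.rank_zero]
  | insert _ _ h ih =>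
    rw [Finset.sum_insert h, Finset.sum_insert h]
    exact le_trans (matrix_rank_add_le _ _) (by omega)

noncomputable def mon {n : ℕ} (g : (Fin n → Bool) → ℝ) : ℕ :=
  Nat.card {S : Finset (Fin n) // fc g S ≠ 0}

lemma mon_eq_card {n : ℕ} (g : (Fin n → Bool) → ℝ) [DecidablePred fun S : Finset (Fin n) => fc g S ≠ 0] :
    mon g = (Finset.univ.filter fun S : Finset (Fin n) => fc g S ≠ 0).card := by
  rw [mon, Nat.card_eq_fintype_card, Fintype.card_subtype]

lemma rank_xor_le_mon {n : ℕ} (g : (Fin n → Bool) → ℝ) :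
    (Matrix.of fun x y : Fin n → Bool => g (fun i => xor (x i) (y i))).rank ≤ mon g := by
  classical
  set supp := Finset.univ.filter fun S : Finset (Fin n) => fc g S ≠ 0 with hsupp
  have hG : (Matrix.of fun x y : Fin n → Bool => g (fun i => xor (x i) (y i)))
      = ∑ S ∈ supp, Matrix.vecMulVec (fun x => fc g S * chi S x) (chi S) := by
    ext x y
    simp only [Matrix.of_apply, Matrix.sum_apply, Matrix.vecMulVec_apply]
    have h1 : g (fun i => xor (x i) (y i))
        = ∑ S : Finset (Fin n), fc g S * chi S (fun i => xor (x i) (y i)) :=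
      (fourier_inversion g _).symm
    rw [h1]
    have hzero : ∀ S ∈ Finset.univ, S ∉ supp →
        fc g S * chi S (fun i => xor (x i) (y i)) = 0 := by
      intro S _ hS
      simp only [hsupp, Finset.mem_filter, Finset.mem_univ, true_and, not_not] at hS
      rw [hS, zero_mul]
    rw [← Finset.sum_subset (Finset.filter_subset _ _) hzero]
    refine Finset.sum_congr rfl fun S _ => ?_
    rw [← chi_mul_chi, mul_assoc]
  rw [hG, mon_eq_card]
  calc (∑ S ∈ supp, Matrix.vecMulVec (fun x => fc g S * chi S x) (chi S)).rank
      ≤ ∑ S ∈ supp, (Matrix.vecMulVec (fun x => fc g S * chi S x) (chi S)).rank :=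
        matrix_rank_sum_le _ _
    _ ≤ ∑ _S ∈ supp, 1 := Finset.sum_le_sum fun S _ => matrix_rank_vecMulVec_le _ _
    _ = supp.card := by rw [Finset.sum_const, smul_eq_mul, mul_one]

/-- `ε`-approximate monomial complexity. -/
noncomputable def monEps {n : ℕ} (ε : ℝ) (f : (Fin n → Bool) → ℝ) : ℕ :=
  sInf {m | ∃ g : (Fin n → Bool) → ℝ, (∀ x, |g x - f x| ≤ ε) ∧ mon g = m}

/-- A real function `p` sign-represents the Boolean function `f`. -/
def signRep {n : ℕ} (p : (Fin n → Bool) → ℝ) (f : (Fin n → Bool) → Bool) : Prop :=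
  ∀ x, if f x then 0 < p x else p x < 0

/-- Sign monomial complexity. -/
noncomputable def signMon {n : ℕ} (f : (Fin n → Bool) → Bool) : ℕ :=
  sInf {m | ∃ p : (Fin n → Bool) → ℝ, signRep p f ∧ mon p = m}

/-- The XOR-matrix `F(x, y) = f(x ⊕ y)`. -/
def xorMatrixB {n : ℕ} (f : (Fin n → Bool) → Bool) :
    Matrix (Fin n → Bool) (Fin n → Bool) Bool :=
  fun x y => f (fun i => xor (x i) (y i))

/-- `ε`-approximate rank of a Boolean matrix. -/
noncomputable def rankEps {ι κ : Type*} [Fintype ι] [Fintype κ]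
    (ε : ℝ) (M : Matrix ι κ Bool) : ℕ :=
  sInf {r | ∃ M' : Matrix ι κ ℝ,
    (∀ i j, |M' i j - (if M i j then 1 else 0)| ≤ ε) ∧ M'.rank = r}

/-- Sign rank of a Boolean matrix. -/
noncomputable def signRank {ι κ : Type*} [Fintype ι] [Fintype κ]
    (M : Matrix ι κ Bool) : ℕ :=
  sInf {r | ∃ M' : Matrix ι κ ℝ,
    (∀ i j, if M i j then 0 < M' i j else M' i j < 0) ∧ M'.rank = r}

theorem monEps_ge_rankEps_and_signMon_ge_signRank {n : ℕ}
    (f : (Fin n → Bool) → Bool) (ε : ℝ) :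
    monEps ε (fun x => if f x then (1 : ℝ) else 0) ≥ rankEps ε (xorMatrixB f) ∧
    signMon f ≥ signRank (xorMatrixB f) := by
  constructor
  · set F1 : (Fin n → Bool) → ℝ := fun x => if f x then (1 : ℝ) else 0 with hF1
    set T := {m | ∃ g : (Fin n → Bool) → ℝ, (∀ x, |g x - F1 x| ≤ ε) ∧ mon g = m} with hT
    by_cases hne : T.Nonempty
    · have hmem := Nat.sInf_mem hne
      obtain ⟨g, hg, hmon⟩ := hmem
      have key : rankEps ε (xorMatrixB f)
          ≤ (Matrix.of fun x y : Fin n → Bool => g (fun i => xor (x i) (y i))).rank := by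
        apply Nat.sInf_le
        refine ⟨Matrix.of fun x y : Fin n → Bool => g (fun i => xor (x i) (y i)), ?_, rfl⟩
        intro x y
        exact hg (fun i => xor (x i) (y i))
      calc rankEps ε (xorMatrixB f) ≤ _ := key
        _ ≤ mon g := rank_xor_le_mon g
        _ = sInf T := hmon
    · have hT0 : sInf T = 0 := by
        rw [Set.not_nonempty_iff_eq_empty] at hne
        rw [hne, Nat.sInf_empty]
      have hR0 : rankEps ε (xorMatrixB f) = 0 := by
        have hRempty : {r | ∃ M' : Matrix (Fin n → Bool) (Fin n → Bool) ℝ,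
            (∀ i j, |M' i j - (if xorMatrixB f i j then 1 else 0)| ≤ ε) ∧ M'.rank = r} = ∅ := by
          rw [Set.eq_empty_iff_forall_notMem]
          rintro r ⟨M', hM', -⟩
          apply hne
          refine ⟨mon fun z => M' z (fun _ => false), fun z => M' z (fun _ => false), fun z => ?_, rfl⟩
          have := hM' z (fun _ => false)
          simpa [xorMatrixB, F1] using this
        rw [rankEps, hRempty, Nat.sInf_empty]
      rw [monEps, ← hT, hT0, hR0]
  · set T := {m | ∃ p : (Fin n → Bool) → ℝ, signRep p f ∧ mon p = m} with hT
    have hne : T.Nonempty := by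
      refine ⟨_, fun x => if f x then (1:ℝ) else -1, fun x => ?_, rfl⟩
      by_cases h : f x <;> simp [h]
    have hmem := Nat.sInf_mem hne
    obtain ⟨p, hp, hmon⟩ := hmem
    have key : signRank (xorMatrixB f)
        ≤ (Matrix.of fun x y : Fin n → Bool => p (fun i => xor (x i) (y i))).rank := by
      apply Nat.sInf_le
      refine ⟨Matrix.of fun x y : Fin n → Bool => p (fun i => xor (x i) (y i)), ?_, rfl⟩
      intro x y
      exact hp (fun i => xor (x i) (y i))
    calc signRank (xorMatrixB f) ≤ _ := key
      _ ≤ mon p := rank_xor_le_mon p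
      _ = sInf T := hmon
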